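/- With the construction K(N) as above, for any w ∈ W the deletion of w from K(N) equals the join K(N̂_w) * Δ^{A_w}, where N̂_w = {N_i : w ∉ N_i} (as a sequence of subsets of W − {w} with new points those a_i with w ∉ N_i) and A_w = {a_i : w ∈ N_i}. -/

import Mathlib

/-- `Ñ i = N i ∪ {a i}` on the vertex set `W ⊕ Fin r` (`a i := Sum.inr i`). -/
def Ntilde {W : Type*} [DecidableEq W] {r : ℕ} (N : Fin r → Finset W) (i : Fin r) :
    Finset (W ⊕ Fin r) :=
  (N i).image Sum.inl ∪ {Sum.inr i}

/-- `K(N)`: the complex on `W ⊕ Fin r` whose faces are the sets containing no `Ñ i`. -/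
def KofN {W : Type*} [DecidableEq W] {r : ℕ} (N : Fin r → Finset W)
    (s : Finset (W ⊕ Fin r)) : Prop :=
  ∀ i, ¬ Ntilde N i ⊆ s

/-- `A_w = {a i : w ∈ N i}`. -/
def Aw {W : Type*} [DecidableEq W] {r : ℕ} (N : Fin r → Finset W) (w : W) :
    Finset (W ⊕ Fin r) :=
  (Finset.univ.filter fun i => w ∈ N i).image Sum.inr

/-- for `w ∈ W`, the deletion of `w` from `K(N)` equals the join
`K(N̂_w) * Δ^{A_w}` with `N̂_w = {N i : w ∉ N i}` and `A_w = {a i : w ∈ N i}`: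
a set `σ` not containing `w` is a face of `K(N)` iff it decomposes as `τ ∪ ρ`
with `ρ ⊆ A_w`, `τ` disjoint from `A_w`, and `τ` a face of `K(N̂_w)`. -/
theorem deletion_KofN {W : Type*} [DecidableEq W] {r : ℕ} (N : Fin r → Finset W) (w : W) :
    ∀ σ : Finset (W ⊕ Fin r), Sum.inl w ∉ σ →
      (KofN N σ ↔ ∃ τ ρ : Finset (W ⊕ Fin r), σ = τ ∪ ρ ∧ ρ ⊆ Aw N w ∧
        Disjoint τ (Aw N w) ∧ ∀ i, w ∉ N i → ¬ Ntilde N i ⊆ τ) := by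
  intro σ hw
  constructor
  · intro hK
    refine ⟨σ \ Aw N w, σ ∩ Aw N w, ?_, Finset.inter_subset_right, Finset.sdiff_disjoint, ?_⟩
    · rw [Finset.sdiff_union_inter]
    · intro i _ hsub
      exact hK i (hsub.trans (Finset.sdiff_subset))
  · rintro ⟨τ, ρ, rfl, hρ, hdisj, hτ⟩ i hsub
    by_cases hwi : w ∈ N i
    · exact hw (hsub (Finset.mem_union.2 (Or.inl (Finset.mem_image.2 ⟨w, hwi, rfl⟩))))
    · refine hτ i hwi (fun x hx => ?_)
      rcases Finset.mem_union.1 (hsub hx) with h | h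
      · exact h
      · exfalso
        have hA := hρ h
        simp only [Ntilde, Aw, Finset.mem_union, Finset.mem_image, Finset.mem_filter,
          Finset.mem_singleton] at hx hA
        rcases hx with ⟨y, _, hy⟩ | rfl
        · rcases hA with ⟨j, _, hj⟩; rw [← hy] at hj; cases hj
        · rcases hA with ⟨j, ⟨_, hjw⟩, hj⟩
          cases Sum.inr_injective hj
          exact hwi hjw
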